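/- Bockstein comparison lemma (Lemma 2.1 of the paper, stated abstractly over F[u]): Let p be a prime, F = ℤ/p, and R = F[u] the polynomial ring. Let N and D be R-modules such that every element of N is annihilated by some power of u. Let K be an index set and, for each k ∈ K, let V_k, U_k, W_k be R-modules with u·V_k = 0, u·U_k = 0, and every element of W_k annihilated by some power of u. Suppose given R-linear maps φ : ⊕_k V_k → N and δ : N → D such that the sequence 0 → ⊕_k V_k →(φ) N →(multiplication by u) N →(δ) D is exact; for each k, R-linear maps φ'_k : V_k → W_k and δ'_k : W_k → U_k such that 0 → V_k →(φ'_k) W_k →(multiplication by u) W_k →(δ'_k) U_k is exact; and R-linear maps f_k : W_k → N and ι_k : U_k → D such that ⊕_k ι_k : ⊕_k U_k → D is injective, f_k ∘ φ'_k = φ ∘ (canonical inclusion of V_k into ⊕_k V_k), and δ ∘ f_k = ι_k ∘ δ'_k for every k. Then the map ∑_k f_k : ⊕_k W_k → N is an isomorphism of R-modules. -/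

import Mathlib

open Polynomial LinearMap DirectSum

/-- The polynomial ring `F[u]` over `F = ℤ/p`; the variable `u` is `Polynomial.X`. -/
abbrev BocksteinBase (p : ℕ) := Polynomial (ZMod p)

private lemma auxComp {R : Type*} [Semiring R] {K : Type*} [DecidableEq K]
    {A B : K → Type*} [∀ k, AddCommMonoid (A k)] [∀ k, Module R (A k)]
    [∀ k, AddCommMonoid (B k)] [∀ k, Module R (B k)]
    (g : ∀ k, A k →ₗ[R] B k) (v : ⨁ k, A k) (k : K) :
    (DirectSum.toModule R K (⨁ k, B k)
      (fun j => (DirectSum.lof R K B j).comp (g j)) v) k = g k (v k) := by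
  classical
  induction v using DirectSum.induction_on with
  | zero => simp
  | of j x =>
      rcases eq_or_ne j k with rfl | hne
      · rw [← DirectSum.lof_eq_of R, DirectSum.toModule_lof, LinearMap.comp_apply,
          DirectSum.lof_eq_of, DirectSum.of_eq_same, DirectSum.lof_eq_of,
          DirectSum.of_eq_same]
      · rw [← DirectSum.lof_eq_of R, DirectSum.toModule_lof, LinearMap.comp_apply,
          DirectSum.lof_eq_of, DirectSum.of_eq_of_ne _ _ _ hne.symm, DirectSum.lof_eq_of,
          DirectSum.of_eq_of_ne _ _ _ hne.symm, map_zero]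
  | add a b ha hb =>
      rw [map_add, DirectSum.add_apply, DirectSum.add_apply, map_add, ha, hb]

private lemma auxLift {R : Type*} [Semiring R] {K : Type*} [DecidableEq K]
    {A B : K → Type*} [∀ k, AddCommMonoid (A k)] [∀ k, Module R (A k)]
    [∀ k, AddCommMonoid (B k)] [∀ k, Module R (B k)]
    (g : ∀ k, A k →ₗ[R] B k) (w : ⨁ k, B k)
    (h : ∀ k, ∃ a : A k, g k a = w k) :
    ∃ v : ⨁ k, A k, DirectSum.toModule R K (⨁ k, B k)
      (fun j => (DirectSum.lof R K B j).comp (g j)) v = w := by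
  classical
  choose c hc using h
  refine ⟨∑ k ∈ DFinsupp.support w, DirectSum.lof R K A k (c k), ?_⟩
  rw [map_sum]
  have h1 : ∀ k ∈ DFinsupp.support w,
      DirectSum.toModule R K (⨁ k, B k) (fun j => (DirectSum.lof R K B j).comp (g j))
        (DirectSum.lof R K A k (c k)) = DirectSum.of B k (w k) := by
    intro k _
    rw [DirectSum.toModule_lof, LinearMap.comp_apply, hc, DirectSum.lof_eq_of]
  rw [Finset.sum_congr rfl h1]
  exact DirectSum.sum_support_of w

/-- Bockstein comparison lemma, Lemma 2.1, abstractly over `R = F[u]`: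
given exact sequences `0 → ⊕ V k → N → N → D` (second map multiplication by `u`)
and `0 → V k → W k → W k → U k`, with `N` and each `W k` `u`-power-torsion,
`u • V k = 0`, `u • U k = 0`, compatible maps `f k : W k → N`, `ι k : U k → D`
with `⊕ ι` injective, `f k ∘ φ' k = φ ∘ (inclusion of V k)` and
`δ ∘ f k = ι k ∘ δ' k`, the induced map `⊕ W k → N` is an isomorphism. -/
theorem stmt0 (p : ℕ) (hp : p.Prime)
    (K : Type*) [DecidableEq K]
    (N D : Type*) [AddCommGroup N] [Module (BocksteinBase p) N]
    [AddCommGroup D] [Module (BocksteinBase p) D]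
    (V U W : K → Type*)
    [∀ k, AddCommGroup (V k)] [∀ k, Module (BocksteinBase p) (V k)]
    [∀ k, AddCommGroup (U k)] [∀ k, Module (BocksteinBase p) (U k)]
    [∀ k, AddCommGroup (W k)] [∀ k, Module (BocksteinBase p) (W k)]
    -- `N` is `u`-power-torsion
    (hN : ∀ x : N, ∃ m : ℕ, ((X : BocksteinBase p) ^ m) • x = 0)
    -- `u • V k = 0` and `u • U k = 0`
    (hV : ∀ (k : K) (x : V k), (X : BocksteinBase p) • x = 0)
    (hU : ∀ (k : K) (x : U k), (X : BocksteinBase p) • x = 0)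
    -- each `W k` is `u`-power-torsion
    (hW : ∀ (k : K) (x : W k), ∃ m : ℕ, ((X : BocksteinBase p) ^ m) • x = 0)
    -- the exact sequence `0 → ⊕ V k → N → N → D`
    (φ : (⨁ k : K, V k) →ₗ[BocksteinBase p] N)
    (δ : N →ₗ[BocksteinBase p] D)
    (hφinj : Function.Injective φ)
    (hex1 : LinearMap.range φ = LinearMap.ker (lsmul (BocksteinBase p) N X))
    (hex2 : LinearMap.range (lsmul (BocksteinBase p) N X) = LinearMap.ker δ)
    -- the exact sequences `0 → V k → W k → W k → U k`
    (φ' : ∀ k, V k →ₗ[BocksteinBase p] W k)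
    (δ' : ∀ k, W k →ₗ[BocksteinBase p] U k)
    (hφ'inj : ∀ k, Function.Injective (φ' k))
    (hex1' : ∀ k, LinearMap.range (φ' k) = LinearMap.ker (lsmul (BocksteinBase p) (W k) X))
    (hex2' : ∀ k, LinearMap.range (lsmul (BocksteinBase p) (W k) X) = LinearMap.ker (δ' k))
    -- the comparison maps
    (f : ∀ k, W k →ₗ[BocksteinBase p] N)
    (ι : ∀ k, U k →ₗ[BocksteinBase p] D)
    (hιinj : Function.Injective (DirectSum.toModule (BocksteinBase p) K D ι))
    (hfφ : ∀ k, (f k).comp (φ' k) = φ.comp (DirectSum.lof (BocksteinBase p) K V k))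
    (hδf : ∀ k, δ.comp (f k) = (ι k).comp (δ' k)) :
    Function.Bijective (DirectSum.toModule (BocksteinBase p) K N f) := by
  classical
  set R := BocksteinBase p
  set F := DirectSum.toModule R K N f with hF
  set Φ : (⨁ k, V k) →ₗ[R] (⨁ k, W k) :=
    DirectSum.toModule R K (⨁ k, W k) (fun j => (DirectSum.lof R K W j).comp (φ' j)) with hΦ
  set Δ : (⨁ k, W k) →ₗ[R] (⨁ k, U k) :=
    DirectSum.toModule R K (⨁ k, U k) (fun j => (DirectSum.lof R K U j).comp (δ' j)) with hΔ
  set Sg : (⨁ k, W k) →ₗ[R] (⨁ k, W k) :=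
    DirectSum.toModule R K (⨁ k, W k)
      (fun j => (DirectSum.lof R K W j).comp (lsmul R (W j) X)) with hSg
  -- F ∘ Φ = φ
  have hFΦ : F.comp Φ = φ := by
    apply DirectSum.linearMap_ext
    intro k
    ext x
    simp only [LinearMap.comp_apply, hΦ, hF, DirectSum.toModule_lof]
    exact LinearMap.congr_fun (hfφ k) x
  -- δ ∘ F = (⊕ι) ∘ Δ
  have hδF : δ.comp F = (DirectSum.toModule R K D ι).comp Δ := by
    apply DirectSum.linearMap_ext
    intro k
    ext x
    simp only [LinearMap.comp_apply, hF, hΔ, DirectSum.toModule_lof]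
    exact LinearMap.congr_fun (hδf k) x
  -- Sg is multiplication by X
  have hSgX : ∀ w : ⨁ k, W k, Sg w = (X : R) • w := by
    have : Sg = DistribMulAction.toLinearMap R _ (X : R) := by
      apply DirectSum.linearMap_ext
      intro k
      ext x : 1
      simp only [LinearMap.comp_apply, hSg, DirectSum.toModule_lof]
      show DirectSum.lof R K W k ((X : R) • x) = (X : R) • DirectSum.lof R K W k x
      rw [map_smul]
    intro w
    rw [this]
    rfl
  -- torsion of ⊕W
  have htor : ∀ w : ⨁ k, W k, ∃ m, ((X : R) ^ m) • w = 0 := by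
    intro w
    induction w using DirectSum.induction_on with
    | zero => exact ⟨0, smul_zero _⟩
    | of k x =>
        obtain ⟨m, hm⟩ := hW k x
        refine ⟨m, ?_⟩
        rw [← DirectSum.lof_eq_of R, ← map_smul, hm, map_zero]
    | add a b ha hb =>
        obtain ⟨m1, h1⟩ := ha
        obtain ⟨m2, h2⟩ := hb
        refine ⟨m1 + m2, ?_⟩
        have e1 : ((X : R) ^ (m1 + m2)) • a = 0 := by
          rw [pow_add, mul_comm, mul_smul, h1, smul_zero]
        have e2 : ((X : R) ^ (m1 + m2)) • b = 0 := by
          rw [pow_add, mul_smul, h2, smul_zero]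
        rw [smul_add, e1, e2, add_zero]
  -- injectivity core
  have hinj : ∀ m (w : ⨁ k, W k), ((X : R) ^ m) • w = 0 → F w = 0 → w = 0 := by
    intro m
    induction m with
    | zero => intro w h _; simpa using h
    | succ m ih =>
        intro w hmw hFw
        have h1 : (X : R) • w = 0 := by
          apply ih
          · rw [smul_smul, ← pow_succ]; exact hmw
          · rw [map_smul, hFw, smul_zero]
        have h2 : ∀ k, ∃ v, φ' k v = w k := by
          intro k
          have hk : w k ∈ LinearMap.ker (lsmul R (W k) X) := by
            have h3 := congrArg (fun z : ⨁ k, W k => z k) h1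
            simpa [DirectSum.smul_apply, LinearMap.mem_ker] using h3
          rw [← hex1' k] at hk
          exact hk
        obtain ⟨v, hv⟩ := auxLift φ' w h2
        have hφv : φ v = 0 := by
          rw [← LinearMap.congr_fun hFΦ v]
          show F (Φ v) = 0
          rw [hΦ, hv, hFw]
        have hv0 : v = 0 := hφinj (by simpa using hφv)
        rw [← hv, hv0, map_zero]
  -- surjectivity core
  have hsur : ∀ m (n : N), ((X : R) ^ m) • n = 0 → ∃ w, F w = n := by
    intro m
    induction m with
    | zero =>
        intro n h
        exact ⟨0, by rw [map_zero]; simpa using h.symm⟩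
    | succ m ih =>
        intro n hn
        obtain ⟨w, hw⟩ := ih ((X : R) • n) (by rw [smul_smul, ← pow_succ]; exact hn)
        have hδw : δ (F w) = 0 := by
          rw [hw]
          have h0 : (X : R) • n ∈ LinearMap.range (lsmul R N X) := ⟨n, rfl⟩
          rw [hex2] at h0
          exact h0
        have hδ'w : ∀ k, δ' k (w k) = 0 := by
          have h0 : Δ w = 0 := by
            apply hιinj
            rw [map_zero, ← LinearMap.comp_apply, ← hδF]
            exact hδw
          intro k
          have h4 := congrArg (fun z : ⨁ k, U k => z k) h0
          have h5 := auxComp δ' w k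
          rw [← hΔ] at h5
          simp only [h0] at h5
          simpa using h5.symm
        have h2 : ∀ k, ∃ y : W k, lsmul R (W k) X y = w k := by
          intro k
          have hk : w k ∈ LinearMap.ker (δ' k) := hδ'w k
          rw [← hex2' k] at hk
          exact hk
        obtain ⟨w', hw'⟩ := auxLift (fun k => lsmul R (W k) X) w h2
        have hsm : (X : R) • w' = w := by
          rw [← hSg] at hw'
          rw [← hSgX, hw']
        have h3 : n - F w' ∈ LinearMap.range φ := by
          rw [hex1, LinearMap.mem_ker]
          show (X : R) • (n - F w') = 0
          rw [smul_sub, ← map_smul, hsm, hw, sub_self]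
        obtain ⟨v, hv⟩ := h3
        refine ⟨w' + Φ v, ?_⟩
        rw [map_add]
        have hFv : F (Φ v) = φ v := LinearMap.congr_fun hFΦ v
        rw [hFv, hv]
        abel
  constructor
  · intro a b hab
    obtain ⟨m, hm⟩ := htor (a - b)
    have h0 := hinj m (a - b) hm (by rw [map_sub, sub_eq_zero]; exact hab)
    exact sub_eq_zero.mp h0
  · intro n
    obtain ⟨m, hm⟩ := hN n
    exact hsur m n hm
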